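/- Define g(Q) = √(2/3) − Q₃₃/|Q| for Q ∈ 𝒮₀ \ {0} (with g(0) := 0), where Q₃₃ is the (3,3) entry and |Q| the Frobenius norm. Then g(Q) ≥ 0 for all Q ∈ 𝒮₀, and g(Q) = 0 if and only if Q = s·Q_∞ for some s ≥ 0, where Q_∞ = e₃⊗e₃ − (1/3)I. -/
import Mathlib


open Finset

/-- The magnetic potential `g(Q) = √(2/3) − Q₃₃/|Q|` (with `g(0) = 0`) is nonnegative
on symmetric traceless `3×3` matrices, and vanishes exactly when `Q = s·Q_∞` for
some `s ≥ 0`, where `Q_∞ = e₃⊗e₃ − (1/3)I`. -/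
theorem stmt5 (Q : Matrix (Fin 3) (Fin 3) ℝ)
    (hsymm : Q.transpose = Q) (htr : Q.trace = 0)
    (g : ℝ)
    (hg : g = if Q = 0 then 0
      else Real.sqrt (2/3) - Q 2 2 / Real.sqrt (∑ i, ∑ j, Q i j ^ 2)) :
    0 ≤ g ∧
    (g = 0 ↔ ∃ s : ℝ, 0 ≤ s ∧
      Q = s • (Matrix.vecMulVec ![0, 0, 1] ![0, 0, 1]
        - (1/3 : ℝ) • (1 : Matrix (Fin 3) (Fin 3) ℝ))) := by
  have e10 : Q 1 0 = Q 0 1 := by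
    have := congrFun (congrFun hsymm 1) 0
    simpa [Matrix.transpose_apply] using this.symm
  have e20 : Q 2 0 = Q 0 2 := by
    have := congrFun (congrFun hsymm 2) 0
    simpa [Matrix.transpose_apply] using this.symm
  have e21 : Q 2 1 = Q 1 2 := by
    have := congrFun (congrFun hsymm 2) 1
    simpa [Matrix.transpose_apply] using this.symm
  rw [Matrix.trace_fin_three] at htr
  set a := Q 0 0 with ha
  set b := Q 1 1 with hb
  set c := Q 2 2 with hc
  set d := Q 0 1 with hd
  set e := Q 0 2 with he
  set f := Q 1 2 with hf
  have hS : (∑ i, ∑ j, Q i j ^ 2)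
      = a^2 + b^2 + c^2 + 2*d^2 + 2*e^2 + 2*f^2 := by
    simp only [Fin.sum_univ_three]
    rw [e10, e20, e21]; ring
  set S := a^2 + b^2 + c^2 + 2*d^2 + 2*e^2 + 2*f^2 with hSdef
  clear_value a b c d e f S
  have hcab : c^2 = (a+b)^2 := by
    have hcc : c = -(a+b) := by linarith
    rw [hcc]; ring
  have hkey : c^2 ≤ (2/3) * S := by
    nlinarith [sq_nonneg (a-b), sq_nonneg d, sq_nonneg e, sq_nonneg f, hcab]
  by_cases hQ0 : Q = 0
  · subst hQ0
    simp only [if_pos rfl] at hg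
    refine ⟨le_of_eq hg.symm, ?_⟩
    constructor
    · intro _
      exact ⟨0, le_refl 0, by simp⟩
    · intro _; exact hg
  · rw [if_neg hQ0, hS] at hg
    have hSpos : 0 < S := by
      rcases lt_or_ge 0 S with h | h
      · exact h
      · exfalso
        have ha0 : a^2 = 0 := by
          linarith [sq_nonneg a, sq_nonneg b, sq_nonneg c, sq_nonneg d, sq_nonneg e, sq_nonneg f]
        have hb0 : b^2 = 0 := by
          linarith [sq_nonneg a, sq_nonneg b, sq_nonneg c, sq_nonneg d, sq_nonneg e, sq_nonneg f]
        have hc0 : c^2 = 0 := by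
          linarith [sq_nonneg a, sq_nonneg b, sq_nonneg c, sq_nonneg d, sq_nonneg e, sq_nonneg f]
        have hd0 : d^2 = 0 := by
          linarith [sq_nonneg a, sq_nonneg b, sq_nonneg c, sq_nonneg d, sq_nonneg e, sq_nonneg f]
        have he0 : e^2 = 0 := by
          linarith [sq_nonneg a, sq_nonneg b, sq_nonneg c, sq_nonneg d, sq_nonneg e, sq_nonneg f]
        have hf0 : f^2 = 0 := by
          linarith [sq_nonneg a, sq_nonneg b, sq_nonneg c, sq_nonneg d, sq_nonneg e, sq_nonneg f]
        rw [pow_eq_zero_iff (two_ne_zero)] at ha0 hb0 hc0 hd0 he0 hf0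
        apply hQ0
        ext i j
        fin_cases i <;> fin_cases j <;> simp_all [Matrix.zero_apply]
    have hsqS : 0 < Real.sqrt S := Real.sqrt_pos.mpr hSpos
    have hc_le : c ≤ Real.sqrt (2/3) * Real.sqrt S := by
      calc c ≤ |c| := le_abs_self c
        _ = Real.sqrt (c^2) := (Real.sqrt_sq_eq_abs c).symm
        _ ≤ Real.sqrt ((2/3) * S) := Real.sqrt_le_sqrt hkey
        _ = Real.sqrt (2/3) * Real.sqrt S := Real.sqrt_mul (by norm_num) S
    have hg_nonneg : 0 ≤ g := by
      rw [hg, sub_nonneg, div_le_iff₀ hsqS]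
      exact hc_le
    refine ⟨hg_nonneg, ?_, ?_⟩
    · -- g = 0 → ∃ s
      intro hgz
      rw [hg, sub_eq_zero, eq_div_iff hsqS.ne'] at hgz
      have hceq : c = Real.sqrt (2/3) * Real.sqrt S := hgz.symm
      have hcpos : 0 < c := by
        rw [hceq]
        positivity
      have hc2 : c^2 = (2/3) * S := by
        have h1 : c^2 = (Real.sqrt (2/3) * Real.sqrt S)^2 := by rw [hceq]
        rw [mul_pow, Real.sq_sqrt (by norm_num : (0:ℝ) ≤ 2/3), Real.sq_sqrt hSpos.le] at h1
        exact h1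
      have hzero : (a-b)^2 + 4*d^2 + 4*e^2 + 4*f^2 = 0 := by
        linear_combination (-3)*hc2 - 2*hSdef + hcab
      have hd0 : d^2 = 0 := by
        linarith [sq_nonneg (a-b), sq_nonneg d, sq_nonneg e, sq_nonneg f]
      have he0 : e^2 = 0 := by
        linarith [sq_nonneg (a-b), sq_nonneg d, sq_nonneg e, sq_nonneg f]
      have hf0 : f^2 = 0 := by
        linarith [sq_nonneg (a-b), sq_nonneg d, sq_nonneg e, sq_nonneg f]
      have hab0 : (a-b)^2 = 0 := by
        linarith [sq_nonneg (a-b), sq_nonneg d, sq_nonneg e, sq_nonneg f]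
      rw [pow_eq_zero_iff (two_ne_zero)] at hd0 he0 hf0 hab0
      have hab : a = b := by linarith [sub_eq_zero.mp hab0]
      have ha2 : a = -c/2 := by linarith
      have hb2 : b = -c/2 := by linarith
      refine ⟨(3/2) * c, by linarith, ?_⟩
      ext i j
      fin_cases i <;> fin_cases j <;>
        simp [Matrix.smul_apply, Matrix.sub_apply, Matrix.vecMulVec_apply,
          Matrix.one_apply, ← ha, ← hb, ← hc, ← hd, ← he, ← hf, e10, e20, e21,
          hd0, he0, hf0] <;> linarith
    · -- ∃ s → g = 0
      rintro ⟨s, hs, hQ⟩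
      have hc' : c = 2/3 * s := by
        rw [hc, hQ]
        simp [Matrix.smul_apply, Matrix.sub_apply, Matrix.vecMulVec_apply, Matrix.one_apply]
        ring
      have ha' : a = -(1/3) * s := by
        rw [ha, hQ]
        simp [Matrix.smul_apply, Matrix.sub_apply, Matrix.vecMulVec_apply, Matrix.one_apply]
        ring
      have hb' : b = -(1/3) * s := by
        rw [hb, hQ]
        simp [Matrix.smul_apply, Matrix.sub_apply, Matrix.vecMulVec_apply, Matrix.one_apply]
        ring
      have hd' : d = 0 := by
        rw [hd, hQ]
        simp [Matrix.smul_apply, Matrix.sub_apply, Matrix.vecMulVec_apply, Matrix.one_apply]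
      have he' : e = 0 := by
        rw [he, hQ]
        simp [Matrix.smul_apply, Matrix.sub_apply, Matrix.vecMulVec_apply, Matrix.one_apply]
      have hf' : f = 0 := by
        rw [hf, hQ]
        simp [Matrix.smul_apply, Matrix.sub_apply, Matrix.vecMulVec_apply, Matrix.one_apply]
      have hspos : 0 < s := by
        rcases hs.lt_or_eq with h | h
        · exact h
        · exfalso; apply hQ0; rw [hQ, ← h]; simp
      have hSval : S = (2/3) * s^2 := by
        rw [hSdef, ha', hb', hc', hd', he', hf']; ring
      have hsqrtS : Real.sqrt S = Real.sqrt (2/3) * s := by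
        rw [hSval, Real.sqrt_mul (by norm_num : (0:ℝ) ≤ 2/3), Real.sqrt_sq hspos.le]
      rw [hg, hsqrtS, hc', sub_eq_zero]
      have h23 : (0:ℝ) < Real.sqrt (2/3) := Real.sqrt_pos.mpr (by norm_num)
      rw [eq_div_iff (by positivity), ← mul_assoc,
        Real.mul_self_sqrt (by norm_num : (0:ℝ) ≤ 2/3)]
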